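/- Let A ∈ ℝ^{n×n}, B ∈ ℝ^{n×m}, and let K ⊆ ℝⁿ be a fixed subspace. Define V* to be the sum (subspace supremum) of all (A,B)-invariant subspaces of ℝⁿ contained in K. Then V* is itself (A,B)-invariant and contained in K; consequently V* is the supremal element of the class of (A,B)-invariant subspaces contained in K, i.e., V* contains every (A,B)-invariant subspace contained in K. -/

import Mathlib

open Matrix

/-- A subspace `V ⊆ ℝⁿ` is `(A,B)`-invariant if `(A + BF) V ⊆ V` for some
state-feedback matrix `F`. -/
def IsABInvariant {n m : ℕ} (A : Matrix (Fin n) (Fin n) ℝ)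
    (B : Matrix (Fin n) (Fin m) ℝ) (V : Submodule ℝ (Fin n → ℝ)) : Prop :=
  ∃ F : Matrix (Fin m) (Fin n) ℝ, ∀ x ∈ V, (A + B * F).mulVec x ∈ V

/-- The "friend" characterization direction: if `A V ⊆ V + Im B` then `V` is
`(A,B)`-invariant. -/
lemma isABInvariant_of_le_sup {n m : ℕ} (A : Matrix (Fin n) (Fin n) ℝ)
    (B : Matrix (Fin n) (Fin m) ℝ) (V : Submodule ℝ (Fin n → ℝ))
    (h : ∀ x ∈ V, A.mulVec x ∈ V ⊔ LinearMap.range B.mulVecLin) :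
    IsABInvariant A B V := by
  set R := LinearMap.range B.mulVecLin with hR
  set T := V ⊔ R with hT
  let s0 : (V × (Fin m → ℝ)) →ₗ[ℝ] (Fin n → ℝ) :=
    V.subtype ∘ₗ LinearMap.fst ℝ V (Fin m → ℝ) + B.mulVecLin ∘ₗ LinearMap.snd ℝ V (Fin m → ℝ)
  have hs0 : ∀ p : V × (Fin m → ℝ), s0 p ∈ T := by
    intro p
    exact Submodule.add_mem _ (Submodule.mem_sup_left p.1.2)
      (Submodule.mem_sup_right ⟨p.2, rfl⟩)
  let s : (V × (Fin m → ℝ)) →ₗ[ℝ] T := s0.codRestrict T hs0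
  have hsur : Function.Surjective s := by
    rintro ⟨t, ht⟩
    rcases Submodule.mem_sup.mp ht with ⟨v, hv, r, hr, rfl⟩
    rcases hr with ⟨u, rfl⟩
    exact ⟨(⟨v, hv⟩, u), rfl⟩
  obtain ⟨σ, hσ⟩ := s.exists_rightInverse_of_surjective (LinearMap.range_eq_top.mpr hsur)
  let q : V →ₗ[ℝ] T := (A.mulVecLin ∘ₗ V.subtype).codRestrict T (fun v => h v v.2)
  obtain ⟨W, hW⟩ := Submodule.exists_isCompl V
  let p := Submodule.linearProjOfIsCompl V W hW
  let G : V →ₗ[ℝ] (Fin m → ℝ) := -(LinearMap.snd ℝ V (Fin m → ℝ) ∘ₗ σ ∘ₗ q)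
  refine ⟨LinearMap.toMatrix' (G ∘ₗ p), fun x hx => ?_⟩
  have hpx : p x = ⟨x, hx⟩ := Submodule.linearProjOfIsCompl_apply_left hW ⟨x, hx⟩
  have hFx : (LinearMap.toMatrix' (G ∘ₗ p)).mulVec x = G ⟨x, hx⟩ := by
    have := Matrix.toLin'_toMatrix' (G ∘ₗ p)
    calc (LinearMap.toMatrix' (G ∘ₗ p)).mulVec x
        = Matrix.toLin' (LinearMap.toMatrix' (G ∘ₗ p)) x := (Matrix.toLin'_apply _ _).symm
      _ = (G ∘ₗ p) x := by rw [this]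
      _ = G ⟨x, hx⟩ := by simp [hpx]
  set w := σ (q ⟨x, hx⟩) with hw
  have hsw : s w = q ⟨x, hx⟩ := by
    have := congrArg (fun f => f (q ⟨x, hx⟩)) hσ
    simpa using this
  have hsw' : (w.1 : Fin n → ℝ) + B.mulVec w.2 = A.mulVec x := by
    have := congrArg (Subtype.val) hsw
    refine Eq.trans ?_ (show ((q ⟨x, hx⟩ : T) : Fin n → ℝ) = A.mulVec x from rfl)
    simpa [s, s0, Matrix.mulVecLin_apply] using this
  have hGx : G ⟨x, hx⟩ = -w.2 := by simp [G, hw]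
  have : (A + B * (LinearMap.toMatrix' (G ∘ₗ p))).mulVec x = (w.1 : Fin n → ℝ) := by
    rw [Matrix.add_mulVec, ← Matrix.mulVec_mulVec, hFx, hGx]
    rw [← hsw']
    simp [Matrix.mulVec_neg]
  rw [this]
  exact w.1.2

theorem supremal_AB_invariant_contained (n m : ℕ)
    (A : Matrix (Fin n) (Fin n) ℝ) (B : Matrix (Fin n) (Fin m) ℝ)
    (K : Submodule ℝ (Fin n → ℝ)) :
    IsABInvariant A B (sSup {V | IsABInvariant A B V ∧ V ≤ K}) ∧
      sSup {V | IsABInvariant A B V ∧ V ≤ K} ≤ K ∧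
      ∀ V : Submodule ℝ (Fin n → ℝ), IsABInvariant A B V → V ≤ K →
        V ≤ sSup {V | IsABInvariant A B V ∧ V ≤ K} := by
  set S := {V : Submodule ℝ (Fin n → ℝ) | IsABInvariant A B V ∧ V ≤ K} with hS
  refine ⟨?_, sSup_le fun V hV => hV.2, fun V hV hVK => le_sSup ⟨hV, hVK⟩⟩
  apply isABInvariant_of_le_sup
  have : sSup S ≤ Submodule.comap A.mulVecLin (sSup S ⊔ LinearMap.range B.mulVecLin) := by
    apply sSup_le
    rintro V ⟨⟨F, hF⟩, hVK⟩
    intro x hx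
    have hx' : A.mulVec x = (A + B * F).mulVec x - B.mulVec (F.mulVec x) := by
      rw [Matrix.add_mulVec, ← Matrix.mulVec_mulVec]; abel
    simp only [Submodule.mem_comap, Matrix.mulVecLin_apply, hx']
    exact Submodule.sub_mem _
      (Submodule.mem_sup_left (le_sSup (show V ∈ S from ⟨⟨F, hF⟩, hVK⟩) (hF x hx)))
      (Submodule.mem_sup_right ⟨F.mulVec x, rfl⟩)
  intro x hx
  exact this hx
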